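/- Let [a, b] ⊂ ℝ be a nondegenerate interval, let h̃ : [a,b] → ℝ be convex, let β ≥ 0, and let g̃ : [a,b] → ℝ satisfy h̃(x) ≤ g̃(x) ≤ h̃(x) + β for all x ∈ [a,b]. Let x_l = (3a+b)/4, x_c = (a+b)/2 and x_r = (a+3b)/4. If |g̃(x_l) − g̃(x_r)| ≤ β, |g̃(x_l) − g̃(x_c)| ≤ β and |g̃(x_r) − g̃(x_c)| ≤ β, then inf_{x ∈ [a,b]} g̃(x) ≥ min( g̃(x_l), g̃(x_c), g̃(x_r) ) − 3β. In particular the point p ∈ {x_l, x_c, x_r} with the smallest value of g̃ satisfies g̃(p) ≤ inf_{[a,b]} g̃ + 3β. -/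

import Mathlib

/-- Left extrapolation: if `x ≤ u < v` and `u - x ≤ v - u`, convexity gives
`h x ≥ h u - 2β` provided `h u - h v ≥ -2β`. -/
lemma convex_extrap_left {s : Set ℝ} {h : ℝ → ℝ} (hc : ConvexOn ℝ s h)
    {x u v β : ℝ} (hx : x ∈ s) (hv : v ∈ s) (hxu : x ≤ u) (huv : u < v)
    (hgap : u - x ≤ v - u) (hβ : 0 ≤ β) (hd : -(2*β) ≤ h u - h v) :
    h u - 2*β ≤ h x := by
  have hvx : 0 < v - x := by linarith
  set t : ℝ := (v - u) / (v - x) with ht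
  have ht0 : 0 ≤ t := div_nonneg (by linarith) hvx.le
  have ht1 : 0 ≤ 1 - t := by
    have : t ≤ 1 := by
      rw [ht, div_le_one hvx]; linarith
    linarith
  have hsum : t + (1 - t) = 1 := by ring
  have htval : t * (v - x) = v - u := by rw [ht]; field_simp
  have h1t : (1 - t) * (v - x) = u - x := by rw [ht]; field_simp; ring
  have hcomb : t • x + (1 - t) • v = u := by
    show t * x + (1 - t) * v = u
    rw [ht]; field_simp; ring
  have key := hc.2 hx hv ht0 ht1 hsum
  rw [hcomb] at key
  have key' : h u ≤ t * h x + (1 - t) * h v := key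
  have key2 : (v - x) * h u ≤ (v - u) * h x + (u - x) * h v := by
    have h' := mul_le_mul_of_nonneg_right key' hvx.le
    calc (v - x) * h u = h u * (v - x) := by ring
      _ ≤ (t * h x + (1 - t) * h v) * (v - x) := h'
      _ = h x * (t * (v - x)) + h v * ((1 - t) * (v - x)) := by ring
      _ = h x * (v - u) + h v * (u - x) := by rw [htval, h1t]
      _ = (v - u) * h x + (u - x) * h v := by ring
  nlinarith [mul_le_mul_of_nonneg_left hd (by linarith : (0:ℝ) ≤ u - x),
    mul_nonneg hβ (by linarith : (0:ℝ) ≤ (v - u) - (u - x))]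

lemma convex_extrap_right {s : Set ℝ} {h : ℝ → ℝ} (hc : ConvexOn ℝ s h)
    {x u v β : ℝ} (hx : x ∈ s) (hv : v ∈ s) (hux : u ≤ x) (hvu : v < u)
    (hgap : x - u ≤ u - v) (hβ : 0 ≤ β) (hd : -(2*β) ≤ h u - h v) :
    h u - 2*β ≤ h x := by
  have hxv : 0 < x - v := by linarith
  set t : ℝ := (u - v) / (x - v) with ht
  have ht0 : 0 ≤ t := div_nonneg (by linarith) hxv.le
  have ht1 : 0 ≤ 1 - t := by
    have : t ≤ 1 := by
      rw [ht, div_le_one hxv]; linarith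
    linarith
  have hsum : t + (1 - t) = 1 := by ring
  have htval : t * (x - v) = u - v := by rw [ht]; field_simp
  have h1t : (1 - t) * (x - v) = x - u := by rw [ht]; field_simp; ring
  have hcomb : t • x + (1 - t) • v = u := by
    show t * x + (1 - t) * v = u
    rw [ht]; field_simp; ring
  have key := hc.2 hx hv ht0 ht1 hsum
  rw [hcomb] at key
  have key' : h u ≤ t * h x + (1 - t) * h v := key
  have key2 : (x - v) * h u ≤ (u - v) * h x + (x - u) * h v := by
    have h' := mul_le_mul_of_nonneg_right key' hxv.le
    calc (x - v) * h u = h u * (x - v) := by ring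
      _ ≤ (t * h x + (1 - t) * h v) * (x - v) := h'
      _ = h x * (t * (x - v)) + h v * ((1 - t) * (x - v)) := by ring
      _ = h x * (u - v) + h v * (x - u) := by rw [htval, h1t]
      _ = (u - v) * h x + (x - u) * h v := by ring
  nlinarith [mul_le_mul_of_nonneg_left hd (by linarith : (0:ℝ) ≤ x - u),
    mul_nonneg hβ (by linarith : (0:ℝ) ≤ (u - v) - (x - u))]

/-- Let `h̃` be convex on a nondegenerate interval `[a,b]`, `β ≥ 0`, and
`g̃` with `h̃ ≤ g̃ ≤ h̃ + β` on `[a,b]`.  If the values of `g̃` at the three quartile points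
`x_l = (3a+b)/4`, `x_c = (a+b)/2`, `x_r = (a+3b)/4` pairwise differ by at most `β`, then
`g̃ ≥ min(g̃(x_l), g̃(x_c), g̃(x_r)) − 3β` on all of `[a,b]`; in particular the best of the
three points is a `3β`-approximate minimizer of `g̃` on `[a,b]`. -/
theorem three_point_flatness_implies_near_optimality
    (a b : ℝ) (hab : a < b) (β : ℝ) (hβ : 0 ≤ β)
    (htil gtil : ℝ → ℝ)
    (hconv : ConvexOn ℝ (Set.Icc a b) htil)
    (hsand : ∀ x ∈ Set.Icc a b, htil x ≤ gtil x ∧ gtil x ≤ htil x + β)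
    (hlr : |gtil ((3*a+b)/4) - gtil ((a+3*b)/4)| ≤ β)
    (hlc : |gtil ((3*a+b)/4) - gtil ((a+b)/2)| ≤ β)
    (hrc : |gtil ((a+3*b)/4) - gtil ((a+b)/2)| ≤ β) :
    (∀ x ∈ Set.Icc a b,
      min (min (gtil ((3*a+b)/4)) (gtil ((a+b)/2))) (gtil ((a+3*b)/4)) - 3*β ≤ gtil x) ∧
    min (min (gtil ((3*a+b)/4)) (gtil ((a+b)/2))) (gtil ((a+3*b)/4))
      ≤ sInf (gtil '' Set.Icc a b) + 3*β := by
  set xl : ℝ := (3*a+b)/4 with hxl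
  set xc : ℝ := (a+b)/2 with hxc
  set xr : ℝ := (a+3*b)/4 with hxr
  have hxlm : xl ∈ Set.Icc a b := ⟨by rw [hxl]; linarith, by rw [hxl]; linarith⟩
  have hxcm : xc ∈ Set.Icc a b := ⟨by rw [hxc]; linarith, by rw [hxc]; linarith⟩
  have hxrm : xr ∈ Set.Icc a b := ⟨by rw [hxr]; linarith, by rw [hxr]; linarith⟩
  obtain ⟨hlc1, hlc2⟩ := abs_le.mp hlc
  obtain ⟨hrc1, hrc2⟩ := abs_le.mp hrc
  obtain ⟨hl1, hl2⟩ := hsand xl hxlm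
  obtain ⟨hc1, hc2⟩ := hsand xc hxcm
  obtain ⟨hr1, hr2⟩ := hsand xr hxrm
  set m : ℝ := min (min (gtil xl) (gtil xc)) (gtil xr) with hm
  have hml : m ≤ gtil xl := le_trans (min_le_left _ _) (min_le_left _ _)
  have hmc : m ≤ gtil xc := le_trans (min_le_left _ _) (min_le_right _ _)
  have hmr : m ≤ gtil xr := min_le_right _ _
  have main : ∀ x ∈ Set.Icc a b, m - 3*β ≤ gtil x := by
    intro x hx
    obtain ⟨hxa, hxb⟩ := hx
    have hgx := (hsand x ⟨hxa, hxb⟩).1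
    rcases le_total x xc with hxle | hxge
    · rcases le_total x xl with h1 | h1
      · -- x ≤ xl, use u = xl, v = xc
        have hd : -(2*β) ≤ htil xl - htil xc := by linarith
        have := convex_extrap_left hconv ⟨hxa, hxb⟩ hxcm h1
          (by rw [hxl, hxc]; linarith) (by rw [hxl, hxc]; linarith) hβ hd
        linarith
      · -- xl ≤ x ≤ xc, use u = xc, v = xr
        have hd : -(2*β) ≤ htil xc - htil xr := by linarith
        have := convex_extrap_left hconv ⟨hxa, hxb⟩ hxrm hxle
          (by rw [hxc, hxr]; linarith) (by rw [hxl, hxc, hxr] at *; linarith) hβ hd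
        linarith
    · rcases le_total x xr with h1 | h1
      · -- xc ≤ x ≤ xr, use u = xc, v = xl
        have hd : -(2*β) ≤ htil xc - htil xl := by linarith
        have := convex_extrap_right hconv ⟨hxa, hxb⟩ hxlm hxge
          (by rw [hxl, hxc]; linarith) (by rw [hxl, hxc, hxr] at *; linarith) hβ hd
        linarith
      · -- xr ≤ x, use u = xr, v = xc
        have hd : -(2*β) ≤ htil xr - htil xc := by linarith
        have := convex_extrap_right hconv ⟨hxa, hxb⟩ hxcm h1
          (by rw [hxc, hxr]; linarith) (by rw [hxc, hxr]; linarith) hβ hd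
        linarith
  refine ⟨main, ?_⟩
  have hne : (gtil '' Set.Icc a b).Nonempty :=
    ⟨gtil xc, ⟨xc, hxcm, rfl⟩⟩
  have hlb : m - 3*β ≤ sInf (gtil '' Set.Icc a b) := by
    apply le_csInf hne
    rintro y ⟨x, hx, rfl⟩
    exact main x hx
  linarith
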